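/- In the KL-UCB algorithm with exploration function log(t) + 3·log(log(t)) applied to a bandit problem with rewards in [0,1], the number of draws of a suboptimal arm a (with μ_a < μ₁, where arm 1 is optimal) satisfies the pathwise inequality: Σ_{t=1}^n 𝟙{A_t = a, μ₁ ≤ u₁(t)} ≤ Σ_{s=1}^n 𝟙{ s·d⁺(μ̂_{a,s}, μ₁) ≤ log(n) + 3·log(log(n)) }, where μ̂_{a,s} is the empirical mean of the first s rewards of arm a, u₁(t) is the KL-UCB index of arm 1 at time t, and d⁺(x,y) = d(x,y)·𝟙{x < y}. -/

import Mathlib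

open scoped ENNReal Classical

/-- Bernoulli KL divergence with the conventions giving `+∞` at the boundary. -/
noncomputable def dBern (p q : ℝ) : ℝ≥0∞ :=
  if (0 < p ∧ q ≤ 0) ∨ (p < 1 ∧ 1 ≤ q) then ⊤
  else ENNReal.ofReal (p * Real.log (p / q) + (1 - p) * Real.log ((1 - p) / (1 - q)))

/-- `d⁺(x,y) = d(x,y) 𝟙{x < y}`. -/
noncomputable def dBernPlus (p q : ℝ) : ℝ≥0∞ := if p < q then dBern p q else 0

lemma dBern_self (p : ℝ) : dBern p p = 0 := by
  unfold dBern
  rw [if_neg (by rintro (⟨h1, h2⟩ | ⟨h1, h2⟩) <;> linarith)]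
  have h1 : p * Real.log (p / p) = 0 := by
    rcases eq_or_ne p 0 with h | h
    · simp [h]
    · rw [div_self h, Real.log_one, mul_zero]
  have h2 : (1 - p) * Real.log ((1 - p) / (1 - p)) = 0 := by
    rcases eq_or_ne p 1 with h | h
    · simp [h]
    · rw [div_self (by intro hh; exact h (by linarith)), Real.log_one, mul_zero]
  rw [h1, h2]; simp

lemma dBern_top {p : ℝ} (hp : p < 1) : dBern p 1 = ⊤ := by
  unfold dBern
  rw [if_pos (Or.inr ⟨hp, le_refl 1⟩)]

lemma dBern_eq {p x : ℝ} (hp0 : 0 ≤ p) (hp1 : p ≤ 1) (hx0 : 0 < x) (hx1 : x < 1) :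
    dBern p x = ENNReal.ofReal
      (p * (Real.log p - Real.log x) + (1 - p) * (Real.log (1 - p) - Real.log (1 - x))) := by
  unfold dBern
  rw [if_neg (by rintro (⟨h1, h2⟩ | ⟨h1, h2⟩) <;> linarith)]
  congr 1
  have e1 : p * Real.log (p / x) = p * (Real.log p - Real.log x) := by
    rcases eq_or_ne p 0 with h | h
    · simp [h]
    · rw [Real.log_div h (ne_of_gt hx0)]
  have e2 : (1 - p) * Real.log ((1 - p) / (1 - x))
      = (1 - p) * (Real.log (1 - p) - Real.log (1 - x)) := by
    rcases eq_or_ne p 1 with h | h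
    · simp [h]
    · rw [Real.log_div (by intro hh; exact h (by linarith)) (by intro hh; linarith)]
  rw [e1, e2]

lemma dBern_mono {p q q' : ℝ} (hp0 : 0 ≤ p) (hpq : p ≤ q) (hqq' : q ≤ q') (hq1 : q' ≤ 1) :
    dBern p q ≤ dBern p q' := by
  have hp1 : p ≤ 1 := hpq.trans (hqq'.trans hq1)
  rcases eq_or_lt_of_le hp1 with hp1' | hp1'
  · have hq'1 : q' = 1 := le_antisymm hq1 (hp1' ▸ (hpq.trans hqq'))
    have hqe : q = 1 := le_antisymm (hqq'.trans hq1) (hp1' ▸ hpq)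
    rw [hq'1, hqe]
  · rcases eq_or_lt_of_le hq1 with h1 | h1
    · rw [h1, dBern_top hp1']; exact le_top
    · rcases eq_or_lt_of_le (hp0.trans hpq) with hq0 | hq0
      · have hp : p = 0 := le_antisymm (hq0 ▸ hpq) hp0
        rw [hp, ← hq0, dBern_self]; exact zero_le
      · have hq'0 : 0 < q' := hq0.trans_le hqq'
        have hqlt1 : q < 1 := lt_of_le_of_lt hqq' h1
        rw [dBern_eq hp0 hp1 hq0 hqlt1, dBern_eq hp0 hp1 hq'0 h1]
        apply ENNReal.ofReal_le_ofReal
        have l1 : Real.log q' - Real.log q ≤ (q' - q) / q := by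
          have h := Real.log_le_sub_one_of_pos (show 0 < q' / q by positivity)
          rw [Real.log_div (ne_of_gt hq'0) (ne_of_gt hq0)] at h
          have e : q' / q - 1 = (q' - q) / q := by field_simp
          linarith
        have hne : (0:ℝ) < 1 - q := by linarith
        have l2 : (q' - q) / (1 - q) ≤ Real.log (1 - q) - Real.log (1 - q') := by
          have h := Real.log_le_sub_one_of_pos (show 0 < (1 - q') / (1 - q) by
            apply div_pos <;> linarith)
          rw [Real.log_div (by intro hh; linarith) (by intro hh; linarith)] at h
          have e : (1 - q') / (1 - q) - 1 = -((q' - q) / (1 - q)) := by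
            field_simp; ring
          linarith
        have b1 : p * (Real.log q' - Real.log q) ≤ q' - q := by
          have hnn : 0 ≤ (q' - q) / q := div_nonneg (by linarith) hq0.le
          have hc1 : q * ((q' - q) / q) = q' - q := by field_simp
          nlinarith [l1, hnn, hc1]
        have b2 : q' - q ≤ (1 - p) * (Real.log (1 - q) - Real.log (1 - q')) := by
          have hnn : 0 ≤ (q' - q) / (1 - q) := div_nonneg (by linarith) hne.le
          have hld : 0 ≤ Real.log (1 - q) - Real.log (1 - q') := le_trans hnn l2
          have hc2 : (1 - q) * ((q' - q) / (1 - q)) = q' - q := by field_simp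
          nlinarith [l2, hld, hc2]
        nlinarith [b1, b2]

lemma dBern_lsc {p y : ℝ} {c : ℝ≥0∞} (hp0 : 0 ≤ p) (hpy : p < y) (hy1 : y ≤ 1)
    (hc : c ≠ ⊤) (h : c < dBern p y) : ∃ q, p ≤ q ∧ q < y ∧ c < dBern p q := by
  have hy0 : 0 < y := lt_of_le_of_lt hp0 hpy
  have hp1 : p ≤ 1 := le_trans hpy.le hy1
  set G : ℝ → ℝ := fun x =>
    p * (Real.log p - Real.log x) + (1 - p) * (Real.log (1 - p) - Real.log (1 - x)) with hGdef
  rcases eq_or_lt_of_le hy1 with hy1' | hy1'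
  · -- y = 1
    have hplt1 : p < 1 := hy1' ▸ hpy
    set C : ℝ := p * Real.log p + (1 - p) * Real.log (1 - p) with hC
    set M : ℝ := (C - c.toReal) / (1 - p) with hM
    set q : ℝ := max p (1 - min (Real.exp (M - 1)) ((1 - p) / 2)) with hq
    have hmin : 0 < min (Real.exp (M - 1)) ((1 - p) / 2) := by
      apply lt_min (Real.exp_pos _); linarith
    have hq1 : q < 1 := by
      apply max_lt hplt1; linarith
    have hqge : 1 - min (Real.exp (M - 1)) ((1 - p) / 2) ≤ q := le_max_right _ _
    have h1q : 1 - q ≤ min (Real.exp (M - 1)) ((1 - p) / 2) := by linarith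
    have h1qpos : 0 < 1 - q := by linarith
    have hq0 : 0 < q := by
      have : 1 - q ≤ (1 - p) / 2 := le_trans h1q (min_le_right _ _)
      linarith
    have hpq : p ≤ q := le_max_left _ _
    refine ⟨q, hpq, by rw [hy1']; exact hq1, ?_⟩
    rw [dBern_eq hp0 hp1 hq0 hq1]
    rw [ENNReal.lt_ofReal_iff_toReal_lt hc]
    have hlogq : Real.log q ≤ 0 := Real.log_nonpos hq0.le hq1.le
    have hlog1q : Real.log (1 - q) ≤ M - 1 := by
      calc Real.log (1 - q) ≤ Real.log (Real.exp (M - 1)) := by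
            apply Real.log_le_log h1qpos (le_trans h1q (min_le_left _ _))
        _ = M - 1 := Real.log_exp _
    have hMeq : (1 - p) * M = C - c.toReal := by
      rw [hM, mul_comm, div_mul_cancel₀ _ (show (1:ℝ) - p ≠ 0 by linarith)]
    nlinarith [hlogq, hlog1q, hMeq, hp0, hplt1]
  · -- y < 1
    have hcont : ContinuousAt G y := by
      apply ContinuousAt.add
      · exact continuousAt_const.mul
          (continuousAt_const.sub (Real.continuousAt_log (ne_of_gt hy0)))
      · refine continuousAt_const.mul (continuousAt_const.sub ?_)
        exact (Real.continuousAt_log (by intro hh; linarith)).comp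
          ((continuous_const.sub continuous_id).continuousAt)
    have hdy : dBern p y = ENNReal.ofReal (G y) := dBern_eq hp0 hp1 hy0 hy1'
    have hcy : c.toReal < G y := by
      rw [hdy, ENNReal.lt_ofReal_iff_toReal_lt hc] at h; exact h
    have h1 : ∀ᶠ x in nhds y, c.toReal < G x := hcont.eventually (eventually_gt_nhds hcy)
    have h2 : ∀ᶠ x in nhds y, p < x := eventually_gt_nhds hpy
    have h3 : ∀ᶠ x in nhdsWithin y (Set.Iio y), (c.toReal < G x ∧ p < x) ∧ x < y := by
      refine Filter.Eventually.and ?_ ?_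
      · exact Filter.Eventually.filter_mono nhdsWithin_le_nhds (h1.and h2)
      · exact eventually_mem_nhdsWithin
    obtain ⟨x, ⟨hx1, hx2⟩, hx3⟩ := h3.exists
    refine ⟨x, hx2.le, hx3, ?_⟩
    rw [dBern_eq hp0 hp1 (lt_of_le_of_lt hp0 hx2) (lt_trans hx3 hy1')]
    rw [ENNReal.lt_ofReal_iff_toReal_lt hc]
    exact hx1

lemma explore_mono {t n : ℕ} (ht : 1 ≤ t) (htn : t ≤ n) :
    ENNReal.ofReal (Real.log t + 3 * Real.log (Real.log t)) ≤
      ENNReal.ofReal (Real.log n + 3 * Real.log (Real.log n)) := by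
  rcases eq_or_lt_of_le ht with h1 | h2
  · rw [← h1]
    norm_num [Real.log_one]
  · apply ENNReal.ofReal_le_ofReal
    have h2' : (1:ℝ) < t := by exact_mod_cast h2
    have h0 : (0:ℝ) < Real.log t := Real.log_pos h2'
    have hlt : Real.log t ≤ Real.log n := Real.log_le_log (by linarith) (by exact_mod_cast htn)
    have := Real.log_le_log h0 hlt
    linarith

/-- Pathwise counting lemma (Lemma 2) for KL-UCB with exploration function
`log t + 3 log log t`: the number of times `t ≤ n` at which the suboptimal arm `a` is
played while `μ₁ ≤ u₁(t)` is at most the number of `s ≤ n` with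
`s d⁺(μ̂_{a,s}, μ₁) ≤ log n + 3 log log n`. -/
theorem klucb_pathwise_counting
    (K : ℕ) (hK : 1 ≤ K) (a : ℕ) (haK : a ∈ Finset.Icc 1 K) (ha1 : a ≠ 1)
    (X : ℕ → ℕ → ℝ) (hX : ∀ b s, X b s ∈ Set.Icc (0 : ℝ) 1)
    (μ1 : ℝ) (hμ1 : μ1 ∈ Set.Icc (0 : ℝ) 1)
    (A : ℕ → ℕ)
    (N : ℕ → ℕ → ℕ)
    (hN : ∀ b t, N b t = ((Finset.Icc 1 t).filter fun s => A s = b).card)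
    (μhat : ℕ → ℕ → ℝ)
    (hμhat : ∀ b s, μhat b s = (∑ i ∈ Finset.Icc 1 s, X b i) / s)
    (u : ℕ → ℕ → ℝ)
    (hu : ∀ b t, u b t = sSup {q : ℝ | q ∈ Set.Icc (μhat b (N b t)) 1 ∧
      (N b t : ℝ≥0∞) * dBern (μhat b (N b t)) q ≤
        ENNReal.ofReal (Real.log t + 3 * Real.log (Real.log t))})
    (hA : ∀ t, A t ∈ Finset.Icc 1 K ∧ ∀ b ∈ Finset.Icc 1 K, u b t ≤ u (A t) t)
    (n : ℕ) :
    (∑ t ∈ Finset.Icc 1 n, if A t = a ∧ μ1 ≤ u 1 t then 1 else 0) ≤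
      ∑ s ∈ Finset.Icc 1 n,
        if (s : ℝ≥0∞) * dBernPlus (μhat a s) μ1 ≤
            ENNReal.ofReal (Real.log n + 3 * Real.log (Real.log n)) then 1 else 0 := by
  classical
  have hμb : ∀ s : ℕ, μhat a s ∈ Set.Icc (0:ℝ) 1 := by
    intro s
    rw [hμhat]
    rcases Nat.eq_zero_or_pos s with h | h
    · simp [h]
    constructor
    · exact div_nonneg (Finset.sum_nonneg fun i _ => (hX a i).1) (Nat.cast_nonneg s)
    · rw [div_le_one (by exact_mod_cast h)]
      calc ∑ i ∈ Finset.Icc 1 s, X a i ≤ ∑ i ∈ Finset.Icc 1 s, 1 :=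
            Finset.sum_le_sum fun i _ => (hX a i).2
        _ = s := by simp [Nat.card_Icc]
  have hNpos : ∀ t, 1 ≤ t → A t = a → 1 ≤ N a t := by
    intro t ht hAt
    rw [hN]
    refine Finset.card_pos.mpr ⟨t, ?_⟩
    simp [Finset.mem_filter, Finset.mem_Icc, ht, hAt]
  have key : ∀ t, 1 ≤ t → A t = a → μ1 ≤ u 1 t →
      (N a t : ℝ≥0∞) * dBernPlus (μhat a (N a t)) μ1 ≤
        ENNReal.ofReal (Real.log t + 3 * Real.log (Real.log t)) := by
    intro t ht hAt hμu
    set s := N a t with hs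
    set p := μhat a s with hp
    set L := ENNReal.ofReal (Real.log t + 3 * Real.log (Real.log t)) with hL
    have hs1 : 1 ≤ s := hNpos t ht hAt
    by_cases hplt : p < μ1
    swap
    · rw [dBernPlus, if_neg hplt, mul_zero]; exact zero_le
    rw [dBernPlus, if_pos hplt]
    by_contra hcon
    push_neg at hcon
    have hsne : (s : ℝ≥0∞) ≠ 0 := by
      simp only [ne_eq, Nat.cast_eq_zero]; omega
    have hsnetop : (s : ℝ≥0∞) ≠ ⊤ := ENNReal.natCast_ne_top s
    have hcne : L / (s : ℝ≥0∞) ≠ ⊤ :=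
      (ENNReal.div_lt_top ENNReal.ofReal_ne_top hsne).ne
    have hdiv : L / (s : ℝ≥0∞) < dBern p μ1 := by
      rw [ENNReal.div_lt_iff (Or.inl hsne) (Or.inl hsnetop)]
      calc L < (s : ℝ≥0∞) * dBern p μ1 := hcon
        _ = dBern p μ1 * s := mul_comm _ _
    obtain ⟨q, hq1, hq2, hq3⟩ := dBern_lsc (hμb s).1 hplt hμ1.2 hcne hdiv
    have hLq : L < (s : ℝ≥0∞) * dBern p q := by
      rw [ENNReal.div_lt_iff (Or.inl hsne) (Or.inl hsnetop)] at hq3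
      calc L < dBern p q * s := hq3
        _ = (s : ℝ≥0∞) * dBern p q := mul_comm _ _
    have hub : u a t ≤ q := by
      rw [hu]
      apply csSup_le
      · exact ⟨p, ⟨le_refl p, (hμb s).2⟩, by
          rw [show μhat a (N a t) = p from rfl, dBern_self, mul_zero]; exact zero_le⟩
      · intro x hx
        obtain ⟨⟨hxp, hx1⟩, hxd⟩ := hx
        by_contra hxq
        push_neg at hxq
        have hmono : dBern p q ≤ dBern p x := dBern_mono (hμb s).1 hq1 hxq.le hx1
        have hlt : L < (s : ℝ≥0∞) * dBern p x :=
          lt_of_lt_of_le hLq (mul_le_mul_right hmono _)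
        exact absurd hxd (not_le.mpr hlt)
    have h1K : (1:ℕ) ∈ Finset.Icc 1 K := Finset.mem_Icc.mpr ⟨le_refl 1, hK⟩
    have hchain : μ1 ≤ u a t := le_trans hμu (hAt ▸ (hA t).2 1 h1K)
    exact absurd (le_trans hchain hub) (not_le.mpr hq2)
  rw [show (∑ t ∈ Finset.Icc 1 n, if A t = a ∧ μ1 ≤ u 1 t then 1 else 0)
      = ((Finset.Icc 1 n).filter fun t => A t = a ∧ μ1 ≤ u 1 t).card from
      (Finset.card_filter _ _).symm]
  rw [show (∑ s ∈ Finset.Icc 1 n,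
        if (s : ℝ≥0∞) * dBernPlus (μhat a s) μ1 ≤
            ENNReal.ofReal (Real.log n + 3 * Real.log (Real.log n)) then 1 else 0)
      = ((Finset.Icc 1 n).filter fun s : ℕ => (s : ℝ≥0∞) * dBernPlus (μhat a s) μ1 ≤
            ENNReal.ofReal (Real.log n + 3 * Real.log (Real.log n))).card from
      (Finset.card_filter _ _).symm]
  apply Finset.card_le_card_of_injOn (fun t => N a t)
  · intro t htT
    simp only [Finset.mem_coe, Finset.mem_filter, Finset.mem_Icc] at htT
    obtain ⟨⟨ht1, htn⟩, hAt, hμu⟩ := htT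
    simp only [Finset.mem_coe, Finset.mem_filter, Finset.mem_Icc]
    refine ⟨⟨hNpos t ht1 hAt, ?_⟩, ?_⟩
    · calc N a t ≤ (Finset.Icc 1 t).card := by rw [hN]; exact Finset.card_filter_le _ _
        _ = t := by simp [Nat.card_Icc]
        _ ≤ n := htn
    · exact le_trans (key t ht1 hAt hμu) (explore_mono ht1 htn)
  · intro t1 h1 t2 h2 hEq
    simp only [Finset.coe_filter, Set.mem_setOf_eq, Finset.mem_Icc] at h1 h2
    have mono : ∀ s t : ℕ, s < t → 1 ≤ t → A t = a → N a s < N a t := by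
      intro s t hst ht1 hAt
      rw [hN, hN]
      apply Finset.card_lt_card
      refine ⟨Finset.filter_subset_filter _ (Finset.Icc_subset_Icc le_rfl hst.le), ?_⟩
      intro hsub
      have : t ∈ (Finset.Icc 1 s).filter fun r => A r = a := by
        apply hsub
        simp [Finset.mem_filter, Finset.mem_Icc, ht1, hAt]
      simp only [Finset.mem_filter, Finset.mem_Icc] at this
      omega
    by_contra hne
    rcases lt_or_gt_of_ne hne with hlt | hlt
    · exact absurd hEq (ne_of_lt (mono t1 t2 hlt h2.1.1 h2.2.1))
    · exact absurd hEq.symm (ne_of_lt (mono t2 t1 hlt h1.1.1 h1.2.1))
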